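/- arXiv:2510.12022 — 10 statements merged into one kernel-verified Lean document; each statement's English description precedes it below -/
import Mathlib

section
/- Let a, b, s ∈ ℝ³ with ‖a‖ = 1, ‖b‖ = 1 and ‖s‖ ≤ 1. Then (a·s)² + (b·s)² + (a·b)² − 2(a·b)(a·s)(b·s) ≤ 1. -/
noncomputable section
open scoped ComplexOrder

/-- Euclidean 3-space, the home of Bloch vectors and measurement directions. -/
abbrev E3 := EuclideanSpace ℝ (Fin 3)

/-- The standard inner ℝ product on ℝ³. -/
def dot (a b : E3) : ℝ := inner ℝ a b

/-- Qubit uncertainty relation: for unit vectors a, b (measurement directions) and a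
Bloch vector s with ‖s‖ ≤ 1, the expectation values a·s, b·s satisfy
(a·s)² + (b·s)² + (a·b)² − 2(a·b)(a·s)(b·s) ≤ 1. -/
theorem qubit_uncertainty_relation (a b s : E3)
    (ha : ‖a‖ = 1) (hb : ‖b‖ = 1) (hs : ‖s‖ ≤ 1) :
    dot a s ^ 2 + dot b s ^ 2 + dot a b ^ 2
      - 2 * dot a b * dot a s * dot b s ≤ 1 := by
  set α := dot a s with hα
  set β := dot b s with hβ
  set γ := dot a b with hγ
  have haa : (inner ℝ a a : ℝ) = 1 := by
    rw [real_inner_self_eq_norm_sq, ha]; ring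
  have hbb : (inner ℝ b b : ℝ) = 1 := by
    rw [real_inner_self_eq_norm_sq, hb]; ring
  have hss : (inner ℝ s s : ℝ) ≤ 1 := by
    rw [real_inner_self_eq_norm_sq]
    nlinarith [norm_nonneg s]
  have hss0 : (0:ℝ) ≤ inner ℝ s s := real_inner_self_nonneg
  have hγ2 : γ^2 ≤ 1 := by
    have := abs_real_inner_le_norm a b
    rw [ha, hb] at this
    have : |γ| ≤ 1 := by simpa [hγ, dot] using this
    nlinarith [abs_nonneg γ, sq_abs γ]
  have e1 : (inner ℝ a s : ℝ) = α := hα.symm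
  have e2 : (inner ℝ b s : ℝ) = β := hβ.symm
  have e3 : (inner ℝ a b : ℝ) = γ := hγ.symm
  have e4 : (inner ℝ s a : ℝ) = α := by rw [real_inner_comm]; exact e1
  have e5 : (inner ℝ s b : ℝ) = β := by rw [real_inner_comm]; exact e2
  have e6 : (inner ℝ b a : ℝ) = γ := by rw [real_inner_comm]; exact e3
  rcases eq_or_lt_of_le hγ2 with h1 | h1
  · -- degenerate case: γ² = 1, so b = γ • a
    have hba : b = γ • a := by
      have hz : ‖b - γ • a‖^2 = 0 := by
        rw [← real_inner_self_eq_norm_sq]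
        simp only [inner_sub_left, inner_sub_right, inner_smul_left, inner_smul_right,
          RCLike.conj_to_real]
        rw [haa, hbb, e3, e6]
        nlinarith
      have : b - γ • a = 0 := by
        have := pow_eq_zero_iff (n := 2) (by norm_num) |>.mp hz
        simpa [norm_eq_zero] using this
      linear_combination (norm := module) this
    have hβα : β = γ * α := by
      rw [hβ, hba, dot, real_inner_smul_left, e1]
    nlinarith
  · -- main case: γ² < 1, use ‖(1-γ²)•s - (α-γβ)•a - (β-γα)•b‖² ≥ 0
    have key : (0:ℝ) ≤ inner ℝ ((1-γ^2) • s - (α-γ*β) • a - (β-γ*α) • b)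
        ((1-γ^2) • s - (α-γ*β) • a - (β-γ*α) • b) := real_inner_self_nonneg
    simp only [inner_sub_left, inner_sub_right, inner_smul_left, inner_smul_right,
      RCLike.conj_to_real] at key
    rw [haa, hbb, e1, e2, e3, e4, e5, e6] at key
    nlinarith [sq_nonneg (1-γ^2), mul_pos (sub_pos.mpr h1) (sub_pos.mpr h1)]
end
end

section
/- (Theorem 1, Bloch form.) Let a, b ∈ ℝ³ be unit vectors and let Ω be a set of vectors in ℝ³ each of norm at most 1. Then for every s, s' ∈ Ω one has g₋(a,b,s) ≤ g₊(a,b,s'); equivalently, the supremum over Ω of g₋ is at most the infimum over Ω of g₊. In particular, any family of expectation values {(a·s, b·s) : s ∈ Ω} arising from two fixed projective binary qubit measurements on a set of qubit states must satisfy this constraint. -/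
noncomputable section
open scoped ComplexOrder

/-- g₊(a,b,s) = (a·s)(b·s) + √(1−(a·s)²)·√(1−(b·s)²). -/
def gPlus (a b s : E3) : ℝ :=
  dot a s * dot b s + Real.sqrt (1 - dot a s ^ 2) * Real.sqrt (1 - dot b s ^ 2)

/-- g₋(a,b,s) = (a·s)(b·s) − √(1−(a·s)²)·√(1−(b·s)²). -/
def gMinus (a b s : E3) : ℝ :=
  dot a s * dot b s - Real.sqrt (1 - dot a s ^ 2) * Real.sqrt (1 - dot b s ^ 2)

lemma sqrt2d (a b c d : ℝ) (ha : 0 ≤ a) (hb : 0 ≤ b) (hc : 0 ≤ c) (hd : 0 ≤ d) :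
    Real.sqrt (a*b) + Real.sqrt (c*d) ≤ Real.sqrt ((a+c)*(b+d)) := by
  have hL : 0 ≤ Real.sqrt (a*b) + Real.sqrt (c*d) := by positivity
  have hsq : (Real.sqrt (a*b) + Real.sqrt (c*d))^2 ≤ (a+c)*(b+d) := by
    rw [Real.sqrt_mul ha, Real.sqrt_mul hc]
    nlinarith [sq_nonneg (Real.sqrt a * Real.sqrt d - Real.sqrt c * Real.sqrt b),
      Real.sq_sqrt ha, Real.sq_sqrt hb, Real.sq_sqrt hc, Real.sq_sqrt hd,
      Real.sqrt_nonneg a, Real.sqrt_nonneg b, Real.sqrt_nonneg c, Real.sqrt_nonneg d]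
  calc Real.sqrt (a*b) + Real.sqrt (c*d)
      = Real.sqrt ((Real.sqrt (a*b) + Real.sqrt (c*d))^2) := (Real.sqrt_sq hL).symm
    _ ≤ Real.sqrt ((a+c)*(b+d)) := Real.sqrt_le_sqrt hsq

lemma key_ineq (a b s : E3) (ha : ‖a‖ = 1) (hb : ‖b‖ = 1) (hs : ‖s‖ ≤ 1) :
    |dot a b - dot a s * dot b s| ≤
      Real.sqrt (1 - dot a s ^ 2) * Real.sqrt (1 - dot b s ^ 2) := by
  set x := dot a s with hx
  set y := dot b s with hy
  have hias : (inner ℝ a s : ℝ) = x := rfl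
  have hibs : (inner ℝ b s : ℝ) = y := rfl
  have hs0 : (0:ℝ) ≤ ‖s‖ := norm_nonneg s
  have hc : (0:ℝ) ≤ 1 - ‖s‖^2 := by nlinarith
  have hxle : |x| ≤ ‖s‖ := by
    calc |x| ≤ ‖a‖ * ‖s‖ := abs_real_inner_le_norm a s
    _ = ‖s‖ := by rw [ha, one_mul]
  have hyle : |y| ≤ ‖s‖ := by
    calc |y| ≤ ‖b‖ * ‖s‖ := abs_real_inner_le_norm b s
    _ = ‖s‖ := by rw [hb, one_mul]
  have hx2 : x^2 ≤ ‖s‖^2 := by nlinarith [abs_nonneg x, sq_abs x]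
  have hy2 : y^2 ≤ ‖s‖^2 := by nlinarith [abs_nonneg y, sq_abs y]
  set u : E3 := a - x • s with hu
  set v : E3 := b - y • s with hv
  have hun : ‖u‖^2 = 1 - 2*x^2 + x^2 * ‖s‖^2 := by
    rw [hu, norm_sub_sq_real, real_inner_smul_right, norm_smul, ha, Real.norm_eq_abs,
        hias, mul_pow, sq_abs]
    ring
  have hvn : ‖v‖^2 = 1 - 2*y^2 + y^2 * ‖s‖^2 := by
    rw [hv, norm_sub_sq_real, real_inner_smul_right, norm_smul, hb, Real.norm_eq_abs,
        hibs, mul_pow, sq_abs]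
    ring
  have huv : (inner ℝ u v : ℝ) = dot a b - 2*x*y + x*y*‖s‖^2 := by
    rw [hu, hv, inner_sub_left, inner_sub_right, inner_sub_right,
        real_inner_smul_left, real_inner_smul_right, real_inner_smul_left,
        real_inner_smul_right, real_inner_self_eq_norm_sq]
    rw [show (inner ℝ s b : ℝ) = y from by rw [real_inner_comm]; exact hibs]
    rw [hias]
    show (inner ℝ a b : ℝ) - y * x - (x * y - x * (y * ‖s‖^2)) = _
    unfold dot
    ring
  have hsplit : dot a b - x*y = (inner ℝ u v : ℝ) + x*y*(1 - ‖s‖^2) := by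
    rw [huv]; ring
  have hstep : |dot a b - x*y| ≤ ‖u‖ * ‖v‖ + |x| * |y| * (1-‖s‖^2) := by
    rw [hsplit]
    calc |(inner ℝ u v : ℝ) + x*y*(1-‖s‖^2)| ≤ |(inner ℝ u v : ℝ)| + |x*y*(1-‖s‖^2)| :=
          abs_add_le _ _
    _ ≤ ‖u‖ * ‖v‖ + |x| * |y| * (1-‖s‖^2) := by
        gcongr
        · exact abs_real_inner_le_norm u v
        · rw [abs_mul, abs_mul, abs_of_nonneg hc]
  refine hstep.trans ?_
  have h1 : ‖u‖ * ‖v‖ = Real.sqrt (‖u‖^2 * ‖v‖^2) := by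
    rw [Real.sqrt_mul (sq_nonneg _), Real.sqrt_sq (norm_nonneg u),
        Real.sqrt_sq (norm_nonneg v)]
  have h2 : |x| * |y| * (1-‖s‖^2) = Real.sqrt ((x^2*(1-‖s‖^2)) * (y^2*(1-‖s‖^2))) := by
    rw [show (x^2*(1-‖s‖^2)) * (y^2*(1-‖s‖^2)) = (|x| * |y| * (1-‖s‖^2))^2 by
      rw [← sq_abs x, ← sq_abs y]; ring]
    rw [Real.sqrt_sq (by positivity)]
  rw [h1, h2]
  have hcs := sqrt2d (‖u‖^2) (‖v‖^2) (x^2*(1-‖s‖^2)) (y^2*(1-‖s‖^2))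
    (sq_nonneg _) (sq_nonneg _) (by positivity) (by positivity)
  have e1 : ‖u‖^2 + x^2*(1-‖s‖^2) = 1 - x^2 := by rw [hun]; ring
  have e2 : ‖v‖^2 + y^2*(1-‖s‖^2) = 1 - y^2 := by rw [hvn]; ring
  rw [e1, e2] at hcs
  rw [← Real.sqrt_mul (by nlinarith)]
  exact hcs

/-- Theorem 1 (Bloch form): for unit measurement directions a, b and any set Ω of
Bloch vectors (each of norm at most 1), g₋(a,b,s) ≤ g₊(a,b,s') for all s, s' ∈ Ω. -/
theorem theorem1_pvm_criterion (a b : E3) (ha : ‖a‖ = 1) (hb : ‖b‖ = 1)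
    (Ω : Set E3) (hΩ : ∀ s ∈ Ω, ‖s‖ ≤ 1) :
    ∀ s ∈ Ω, ∀ s' ∈ Ω, gMinus a b s ≤ gPlus a b s' := by
  intro s hs s' hs'
  have h1 := abs_le.mp (key_ineq a b s ha hb (hΩ s hs))
  have h2 := abs_le.mp (key_ineq a b s' ha hb (hΩ s' hs'))
  unfold gMinus gPlus
  linarith [h1.1, h1.2, h2.1, h2.2]
end
end

section
/- (Theorem 1, density-matrix form.) Let a, b ∈ ℝ³ be unit vectors and let ρ, ρ' be qubit density matrices. Set A_ρ = Re(Tr(ρ·σ(a))), B_ρ = Re(Tr(ρ·σ(b))), and similarly A_{ρ'}, B_{ρ'}. Then A_ρ·B_ρ − √(1−A_ρ²)·√(1−B_ρ²) ≤ A_{ρ'}·B_{ρ'} + √(1−A_{ρ'}²)·√(1−B_{ρ'}²). -/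
noncomputable section
open scoped ComplexOrder

/-- σ(a) = a₁σₓ + a₂σ_y + a₃σ_z as an explicit 2×2 complex matrix. -/
def pauli (a : E3) : Matrix (Fin 2) (Fin 2) ℂ :=
  !![(a 2 : ℂ), (a 0 : ℂ) - Complex.I * (a 1 : ℂ);
     (a 0 : ℂ) + Complex.I * (a 1 : ℂ), -(a 2 : ℂ)]

/-- The trace of ρ·σ(a) in terms of the entries of ρ. -/
lemma trace_pauli_re (ρ : Matrix (Fin 2) (Fin 2) ℂ) (h10 : ρ 1 0 = starRingEnd ℂ (ρ 0 1))
    (h00 : (ρ 0 0).im = 0) (h11 : (ρ 1 1).im = 0) (a : E3) :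
    (ρ * pauli a).trace.re
      = (2*(ρ 0 1).re) * a 0 + (-2*(ρ 0 1).im) * a 1 + ((ρ 0 0).re - (ρ 1 1).re) * a 2 := by
  simp [Matrix.trace_fin_two, Matrix.mul_apply, Fin.sum_univ_two, pauli, h10, Complex.add_re,
    Complex.mul_re, Complex.mul_im, Complex.sub_re, Complex.sub_im, h00, h11]
  ring

/-- A density matrix has a Bloch vector of norm at most one. -/
lemma bloch (ρ : Matrix (Fin 2) (Fin 2) ℂ) (hρ : ρ.PosSemidef) (hρtr : ρ.trace = 1) :
    ∃ r0 r1 r2 : ℝ, r0^2 + r1^2 + r2^2 ≤ 1 ∧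
      ∀ a : E3, (ρ * pauli a).trace.re = r0 * a 0 + r1 * a 1 + r2 * a 2 := by
  have hH := hρ.1
  have h10 : ρ 1 0 = starRingEnd ℂ (ρ 0 1) := by
    have := hH.apply 1 0
    simpa using this.symm
  have h00' : starRingEnd ℂ (ρ 0 0) = ρ 0 0 := by
    have := hH.apply 0 0; simpa using this
  have h11' : starRingEnd ℂ (ρ 1 1) = ρ 1 1 := by
    have := hH.apply 1 1; simpa using this
  have h00 : (ρ 0 0).im = 0 := Complex.conj_eq_iff_im.mp h00'
  have h11 : (ρ 1 1).im = 0 := Complex.conj_eq_iff_im.mp h11'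
  set p := (ρ 0 0).re with hp
  set s := (ρ 1 1).re with hs
  set qre := (ρ 0 1).re with hqre
  set qim := (ρ 0 1).im with hqim
  -- trace = 1 gives p + s = 1
  have htr : p + s = 1 := by
    have := congrArg Complex.re hρtr
    simpa [Matrix.trace_fin_two, Complex.add_re] using this
  -- diagonal entries nonneg
  have hp0 : 0 ≤ p := by
    have h1 := hρ.dotProduct_mulVec_nonneg (Pi.single 0 1)
    have := (Complex.le_def.mp h1).1
    simpa [dotProduct, Matrix.mulVec, Fin.sum_univ_two, Pi.single_apply] using this
  have hs0 : 0 ≤ s := by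
    have h1 := hρ.dotProduct_mulVec_nonneg (Pi.single 1 1)
    have := (Complex.le_def.mp h1).1
    simpa [dotProduct, Matrix.mulVec, Fin.sum_univ_two, Pi.single_apply] using this
  -- the quadratic form inequality: for all real t,
  -- 0 ≤ (qre²+qim²)·p·t² + 2(qre²+qim²)·t + s
  have hquad : ∀ t : ℝ, 0 ≤ (qre^2+qim^2) * p * (t*t) + 2*(qre^2+qim^2) * t + s := by
    intro t
    have h1 := hρ.dotProduct_mulVec_nonneg ![(t:ℂ) * ρ 0 1, 1]
    have h2 := (Complex.le_def.mp h1).1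
    simp [dotProduct, Matrix.mulVec, Fin.sum_univ_two, h10, Complex.add_re,
      Complex.mul_re, Complex.mul_im, h00, h11] at h2
    nlinarith [h2]
  -- ps ≥ |q|²
  have hdisc : discrim ((qre^2+qim^2) * p) (2*(qre^2+qim^2)) s ≤ 0 :=
    discrim_le_zero hquad
  rw [discrim] at hdisc
  have hdet : qre^2 + qim^2 ≤ p * s := by
    rcases eq_or_lt_of_le (by positivity : (0:ℝ) ≤ qre^2 + qim^2) with h | h
    · rw [← h]; positivity
    · nlinarith [hdisc]
  refine ⟨2*qre, -2*qim, p - s, by nlinarith, fun a => ?_⟩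
  rw [trace_pauli_re ρ h10 h00 h11 a]

/-- ‖a‖ = 1 in coordinates. -/
lemma coords_unit (a : E3) (ha : ‖a‖ = 1) : (a 0)^2 + (a 1)^2 + (a 2)^2 = 1 := by
  have h := ha
  rw [EuclideanSpace.norm_eq] at h
  have h2 : ∑ i : Fin 3, ‖a i‖ ^ 2 = 1 := by
    have hs := Real.sq_sqrt (by positivity : (0:ℝ) ≤ ∑ i : Fin 3, ‖a i‖ ^ 2)
    rw [h] at hs
    simpa using hs.symm
  simpa [Fin.sum_univ_three, Real.norm_eq_abs, sq_abs] using h2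

/-- The Gram determinant inequality written out in coordinates. -/
lemma gram (a0 a1 a2 b0 b1 b2 r0 r1 r2 : ℝ)
    (hna : a0^2+a1^2+a2^2 = 1) (hnb : b0^2+b1^2+b2^2 = 1) (hr : r0^2+r1^2+r2^2 ≤ 1) :
    (r0*a0+r1*a1+r2*a2)^2 + (r0*b0+r1*b1+r2*b2)^2 + (a0*b0+a1*b1+a2*b2)^2
      - 2*(r0*a0+r1*a1+r2*a2)*(r0*b0+r1*b1+r2*b2)*(a0*b0+a1*b1+a2*b2) ≤ 1 := by
  nlinarith [sq_nonneg (a0*(b1*r2-b2*r1) - a1*(b0*r2-b2*r0) + a2*(b0*r1-b1*r0)),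
    mul_nonneg (sub_nonneg.mpr hr) (sq_nonneg (a0*b1-a1*b0)),
    mul_nonneg (sub_nonneg.mpr hr) (sq_nonneg (a0*b2-a2*b0)),
    mul_nonneg (sub_nonneg.mpr hr) (sq_nonneg (a1*b2-a2*b1))]

lemma expect_sq_le_one (a0 a1 a2 r0 r1 r2 : ℝ)
    (hna : a0^2+a1^2+a2^2 = 1) (hr : r0^2+r1^2+r2^2 ≤ 1) :
    (r0*a0+r1*a1+r2*a2)^2 ≤ 1 := by
  nlinarith [sq_nonneg (r0*a1-r1*a0), sq_nonneg (r0*a2-r2*a0), sq_nonneg (r1*a2-r2*a1)]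

/-- lower bound: AB − √(1−A²)√(1−B²) ≤ c. -/
lemma lower_bd (A B c : ℝ) (hA : A^2 ≤ 1) (hB : B^2 ≤ 1)
    (h : A^2 + B^2 + c^2 - 2*A*B*c ≤ 1) :
    A*B - Real.sqrt (1-A^2) * Real.sqrt (1-B^2) ≤ c := by
  have h1 : (0:ℝ) ≤ 1 - A^2 := by linarith
  have h2 : (0:ℝ) ≤ 1 - B^2 := by linarith
  rcases le_or_gt (A*B - c) 0 with hc | hc
  · nlinarith [mul_nonneg (Real.sqrt_nonneg (1-A^2)) (Real.sqrt_nonneg (1-B^2))]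
  · have key : A*B - c ≤ Real.sqrt ((1-A^2)*(1-B^2)) := by
      nlinarith [Real.sq_sqrt (mul_nonneg h1 h2), Real.sqrt_nonneg ((1-A^2)*(1-B^2))]
    rw [Real.sqrt_mul h1] at key
    linarith

/-- upper bound: c ≤ AB + √(1−A²)√(1−B²). -/
lemma upper_bd (A B c : ℝ) (hA : A^2 ≤ 1) (hB : B^2 ≤ 1)
    (h : A^2 + B^2 + c^2 - 2*A*B*c ≤ 1) :
    c ≤ A*B + Real.sqrt (1-A^2) * Real.sqrt (1-B^2) := by
  have h1 : (0:ℝ) ≤ 1 - A^2 := by linarith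
  have h2 : (0:ℝ) ≤ 1 - B^2 := by linarith
  rcases le_or_gt (c - A*B) 0 with hc | hc
  · nlinarith [mul_nonneg (Real.sqrt_nonneg (1-A^2)) (Real.sqrt_nonneg (1-B^2))]
  · have key : c - A*B ≤ Real.sqrt ((1-A^2)*(1-B^2)) := by
      nlinarith [Real.sq_sqrt (mul_nonneg h1 h2), Real.sqrt_nonneg ((1-A^2)*(1-B^2))]
    rw [Real.sqrt_mul h1] at key
    linarith

/-- Theorem 1 (density-matrix form): for unit vectors a, b and qubit density matrices
ρ, ρ', with A_ρ = Re Tr(ρ σ(a)), B_ρ = Re Tr(ρ σ(b)), we have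
A_ρB_ρ − √(1−A_ρ²)√(1−B_ρ²) ≤ A_ρ'B_ρ' + √(1−A_ρ'²)√(1−B_ρ'²). -/
theorem theorem1_density_matrix_form (a b : E3) (ha : ‖a‖ = 1) (hb : ‖b‖ = 1)
    (ρ ρ' : Matrix (Fin 2) (Fin 2) ℂ)
    (hρ : ρ.PosSemidef) (hρtr : ρ.trace = 1)
    (hρ' : ρ'.PosSemidef) (hρ'tr : ρ'.trace = 1) :
    (ρ * pauli a).trace.re * (ρ * pauli b).trace.re
        - Real.sqrt (1 - (ρ * pauli a).trace.re ^ 2)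
          * Real.sqrt (1 - (ρ * pauli b).trace.re ^ 2)
      ≤ (ρ' * pauli a).trace.re * (ρ' * pauli b).trace.re
        + Real.sqrt (1 - (ρ' * pauli a).trace.re ^ 2)
          * Real.sqrt (1 - (ρ' * pauli b).trace.re ^ 2) := by
  obtain ⟨r0, r1, r2, hr, hrval⟩ := bloch ρ hρ hρtr
  obtain ⟨t0, t1, t2, ht, htval⟩ := bloch ρ' hρ' hρ'tr
  have hna := coords_unit a ha
  have hnb := coords_unit b hb
  have hL : (ρ * pauli a).trace.re * (ρ * pauli b).trace.re
      - Real.sqrt (1 - (ρ * pauli a).trace.re ^ 2)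
        * Real.sqrt (1 - (ρ * pauli b).trace.re ^ 2)
      ≤ a 0 * b 0 + a 1 * b 1 + a 2 * b 2 := by
    rw [hrval a, hrval b]
    exact lower_bd _ _ _ (expect_sq_le_one _ _ _ _ _ _ hna hr)
      (expect_sq_le_one _ _ _ _ _ _ hnb hr)
      (gram (a 0) (a 1) (a 2) (b 0) (b 1) (b 2) r0 r1 r2 hna hnb hr)
  have hU : a 0 * b 0 + a 1 * b 1 + a 2 * b 2
      ≤ (ρ' * pauli a).trace.re * (ρ' * pauli b).trace.re
      + Real.sqrt (1 - (ρ' * pauli a).trace.re ^ 2)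
        * Real.sqrt (1 - (ρ' * pauli b).trace.re ^ 2) := by
    rw [htval a, htval b]
    exact upper_bd _ _ _ (expect_sq_le_one _ _ _ _ _ _ hna ht)
      (expect_sq_le_one _ _ _ _ _ _ hnb ht)
      (gram (a 0) (a 1) (a 2) (b 0) (b 1) (b 2) t0 t1 t2 hna hnb ht)
  linarith
end
end

section
/- Let a_i, a_j ∈ ℝ³ be unit vectors and let (r_i, r'_i), (r_j, r'_j) be real pairs with r'_l ≥ 0 and |r_l| + r'_l ≤ 1 for l = i, j. For s ∈ ℝ³ set A_l(s) = r'_l·(a_l·s) + r_l. Then for every s ∈ ℝ³ with ‖s‖ ≤ 1: (A_i(s)−r_i)(A_j(s)−r_j) − √(r'_i² − (A_i(s)−r_i)²)·√(r'_j² − (A_j(s)−r_j)²) ≤ (a_i·a_j)·r'_i·r'_j ≤ (A_i(s)−r_i)(A_j(s)−r_j) + √(r'_i² − (A_i(s)−r_i)²)·√(r'_j² − (A_j(s)−r_j)²). -/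
noncomputable section
open scoped ComplexOrder

def Aexp (r' r : ℝ) (a s : E3) : ℝ := r' * dot a s + r

lemma alg_key (c x y m : ℝ) (hm0 : 0 ≤ m) (hm1 : m ≤ 1) (hx2 : x^2 ≤ m)
    (hy2 : y^2 ≤ m) (hc2 : c^2 ≤ 1)
    (hcs : (m^2*c - m*(x*y)) * (m^2*c - m*(x*y)) ≤ (m^2 - m*x^2) * (m^2 - m*y^2)) :
    (c - x*y)^2 ≤ (1 - x^2) * (1 - y^2) := by
  rcases eq_or_lt_of_le hm0 with h0 | h0
  · have hx0 : x = 0 := by nlinarith [sq_nonneg x]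
    have hy0 : y = 0 := by nlinarith [sq_nonneg y]
    rw [hx0, hy0]; nlinarith
  · have hE : 0 ≤ m - x^2 - y^2 - m*c^2 + 2*c*x*y := by
      nlinarith [mul_pos (mul_pos h0 h0) h0, sq_nonneg (m*c - x*y)]
    nlinarith [mul_nonneg (sub_nonneg.mpr hm1) (sub_nonneg.mpr hc2)]

lemma key_geo (ai aj s : E3) (hai : ‖ai‖ = 1) (haj : ‖aj‖ = 1) (hs : ‖s‖ ≤ 1) :
    (dot ai aj - dot ai s * dot aj s)^2 ≤ (1 - dot ai s^2) * (1 - dot aj s^2) := by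
  have hm0 : (0:ℝ) ≤ ‖s‖^2 := sq_nonneg _
  have hm1 : ‖s‖^2 ≤ 1 := by nlinarith [norm_nonneg s]
  have hss : (inner ℝ s s : ℝ) = ‖s‖^2 := real_inner_self_eq_norm_sq s
  have hii : (inner ℝ ai ai : ℝ) = 1 := by
    rw [real_inner_self_eq_norm_sq, hai]; norm_num
  have hjj : (inner ℝ aj aj : ℝ) = 1 := by
    rw [real_inner_self_eq_norm_sq, haj]; norm_num
  have hx2 : dot ai s^2 ≤ ‖s‖^2 := by
    have h := abs_real_inner_le_norm ai s
    rw [hai, one_mul] at h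
    have h2 := abs_le.mp h
    unfold dot; nlinarith [h2.1, h2.2]
  have hy2 : dot aj s^2 ≤ ‖s‖^2 := by
    have h := abs_real_inner_le_norm aj s
    rw [haj, one_mul] at h
    have h2 := abs_le.mp h
    unfold dot; nlinarith [h2.1, h2.2]
  have hc2 : dot ai aj^2 ≤ 1 := by
    have h := abs_real_inner_le_norm ai aj
    rw [hai, haj, one_mul] at h
    have h2 := abs_le.mp h
    unfold dot; nlinarith [h2.1, h2.2]
  apply alg_key _ _ _ (‖s‖^2) hm0 hm1 hx2 hy2 hc2
  have hcs := real_inner_mul_inner_self_le (‖s‖^2 • ai - dot ai s • s) (‖s‖^2 • aj - dot aj s • s)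
  have h3 : (inner ℝ s ai : ℝ) = dot ai s := real_inner_comm ai s
  have h4 : (inner ℝ s aj : ℝ) = dot aj s := real_inner_comm aj s
  have h1 : (inner ℝ ai s : ℝ) = dot ai s := rfl
  have h2 : (inner ℝ aj s : ℝ) = dot aj s := rfl
  have h5 : (inner ℝ ai aj : ℝ) = dot ai aj := rfl
  simp only [inner_sub_left, inner_sub_right, real_inner_smul_left, real_inner_smul_right,
    hss, hii, hjj, h1, h2, h3, h4, h5] at hcs
  nlinarith [hcs]

/-- The key inference inequality (Eq. (4)): the quantity (a_i·a_j)·r'_i·r'_j is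
sandwiched between (A_i−r_i)(A_j−r_j) ∓ √(r'_i²−(A_i−r_i)²)·√(r'_j²−(A_j−r_j)²). -/
theorem inference_inequality (ai aj : E3) (hai : ‖ai‖ = 1) (haj : ‖aj‖ = 1)
    (ri ri' rj rj' : ℝ) (hi' : 0 ≤ ri') (hi : |ri| + ri' ≤ 1)
    (hj' : 0 ≤ rj') (hj : |rj| + rj' ≤ 1) :
    ∀ s : E3, ‖s‖ ≤ 1 →
      (Aexp ri' ri ai s - ri) * (Aexp rj' rj aj s - rj)
          - Real.sqrt (ri' ^ 2 - (Aexp ri' ri ai s - ri) ^ 2)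
            * Real.sqrt (rj' ^ 2 - (Aexp rj' rj aj s - rj) ^ 2)
        ≤ dot ai aj * ri' * rj' ∧
      dot ai aj * ri' * rj'
        ≤ (Aexp ri' ri ai s - ri) * (Aexp rj' rj aj s - rj)
          + Real.sqrt (ri' ^ 2 - (Aexp ri' ri ai s - ri) ^ 2)
            * Real.sqrt (rj' ^ 2 - (Aexp rj' rj aj s - rj) ^ 2) := by
  intro s hs
  have hAi : Aexp ri' ri ai s - ri = ri' * dot ai s := by simp [Aexp]
  have hAj : Aexp rj' rj aj s - rj = rj' * dot aj s := by simp [Aexp]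
  rw [hAi, hAj]
  have hx1 : |dot ai s| ≤ 1 := by
    have h := abs_real_inner_le_norm ai s
    rw [hai, one_mul] at h
    exact le_trans h hs
  have hy1 : |dot aj s| ≤ 1 := by
    have h := abs_real_inner_le_norm aj s
    rw [haj, one_mul] at h
    exact le_trans h hs
  have hx2 : dot ai s^2 ≤ 1 := by
    have h2 := abs_le.mp hx1; nlinarith [h2.1, h2.2]
  have hy2 : dot aj s^2 ≤ 1 := by
    have h2 := abs_le.mp hy1; nlinarith [h2.1, h2.2]
  have hkey := key_geo ai aj s hai haj hs
  have h1 : ri'^2 - (ri' * dot ai s)^2 = ri'^2 * (1 - dot ai s^2) := by ring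
  have h2 : rj'^2 - (rj' * dot aj s)^2 = rj'^2 * (1 - dot aj s^2) := by ring
  rw [h1, h2]
  have hs1 : Real.sqrt (ri'^2 * (1 - dot ai s^2)) = ri' * Real.sqrt (1 - dot ai s^2) := by
    rw [Real.sqrt_mul (sq_nonneg _), Real.sqrt_sq hi']
  have hs2 : Real.sqrt (rj'^2 * (1 - dot aj s^2)) = rj' * Real.sqrt (1 - dot aj s^2) := by
    rw [Real.sqrt_mul (sq_nonneg _), Real.sqrt_sq hj']
  rw [hs1, hs2]
  have habs : |dot ai aj - dot ai s * dot aj s|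
      ≤ Real.sqrt (1 - dot ai s^2) * Real.sqrt (1 - dot aj s^2) := by
    rw [← Real.sqrt_mul (by linarith)]
    exact Real.abs_le_sqrt hkey
  have hrr : (0:ℝ) ≤ ri' * rj' := mul_nonneg hi' hj'
  have hmul := mul_le_mul_of_nonneg_right habs hrr
  have hup := mul_le_mul_of_nonneg_right (le_abs_self (dot ai aj - dot ai s * dot aj s)) hrr
  have hlo := mul_le_mul_of_nonneg_right (neg_abs_le (dot ai aj - dot ai s * dot aj s)) hrr
  constructor
  · nlinarith
  · nlinarith
end
end

section
/- (Theorem 2, Bloch form.) Let a_i, a_j ∈ ℝ³ be unit vectors and let (r_i, r'_i), (r_j, r'_j) be real pairs with r'_l ≥ 0 and |r_l| + r'_l ≤ 1 for l = i, j. For s ∈ ℝ³ set A_l(s) = r'_l·(a_l·s) + r_l, and define g^{(r)}_±(s) = (A_i(s)−r_i)(A_j(s)−r_j) ± √((1−|r_i|)² − (A_i(s)−r_i)²)·√((1−|r_j|)² − (A_j(s)−r_j)²). Then for all s, s' ∈ ℝ³ with ‖s‖ ≤ 1 and ‖s'‖ ≤ 1, one has g^{(r)}_−(s) ≤ g^{(r)}_+(s').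 -/
noncomputable section
open scoped ComplexOrder

/-- g^{(r)}_+ of Theorem 2. -/
def grPlus (ri ri' rj rj' : ℝ) (ai aj s : E3) : ℝ :=
  (Aexp ri' ri ai s - ri) * (Aexp rj' rj aj s - rj)
    + Real.sqrt ((1 - |ri|) ^ 2 - (Aexp ri' ri ai s - ri) ^ 2)
      * Real.sqrt ((1 - |rj|) ^ 2 - (Aexp rj' rj aj s - rj) ^ 2)

/-- g^{(r)}_− of Theorem 2. -/
def grMinus (ri ri' rj rj' : ℝ) (ai aj s : E3) : ℝ :=
  (Aexp ri' ri ai s - ri) * (Aexp rj' rj aj s - rj)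
    - Real.sqrt ((1 - |ri|) ^ 2 - (Aexp ri' ri ai s - ri) ^ 2)
      * Real.sqrt ((1 - |rj|) ^ 2 - (Aexp rj' rj aj s - rj) ^ 2)


/-! ### Auxiliary lemmas -/

private lemma gram_aux (a b s : E3) (ha : ‖a‖ = 1) (hb : ‖b‖ = 1) (hs : ‖s‖ ≤ 1) :
    (dot a s)^2 + (dot b s)^2 + (dot a b)^2 - 2*(dot a b)*(dot a s)*(dot b s) ≤ 1 := by
  have haa : (inner ℝ a a : ℝ) = 1 := by rw [real_inner_self_eq_norm_sq, ha]; norm_num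
  have hbb : (inner ℝ b b : ℝ) = 1 := by rw [real_inner_self_eq_norm_sq, hb]; norm_num
  have hss : (inner ℝ s s : ℝ) = ‖s‖^2 := real_inner_self_eq_norm_sq s
  set u := dot a s with hu
  set v := dot b s with hv
  set c := dot a b with hc
  have h1 : (inner ℝ s a : ℝ) = u := by rw [real_inner_comm]; exact hu.symm
  have h2 : (inner ℝ s b : ℝ) = v := by rw [real_inner_comm]; exact hv.symm
  have h3 : (inner ℝ b a : ℝ) = c := by rw [real_inner_comm]; exact hc.symm
  have h1' : (inner ℝ a s : ℝ) = u := hu.symm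
  have h2' : (inner ℝ b s : ℝ) = v := hv.symm
  have h3' : (inner ℝ a b : ℝ) = c := hc.symm
  clear_value u v c
  have key : ∀ t : ℝ, 0 ≤ ‖s‖^2 - 2*t*(u^2+v^2-2*c*u*v) + t^2*(1-c^2)*(u^2+v^2-2*c*u*v) := by
    intro t
    have h0 : (0:ℝ) ≤ inner ℝ (s - ((t*(u-c*v)) • a + (t*(v-c*u)) • b))
        (s - ((t*(u-c*v)) • a + (t*(v-c*u)) • b)) := real_inner_self_nonneg
    simp only [inner_sub_left, inner_sub_right, inner_add_left, inner_add_right,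
      real_inner_smul_left, real_inner_smul_right] at h0
    rw [haa, hbb, hss, h1, h2, h3, h1', h2', h3'] at h0
    nlinarith [h0]
  have habs : |c| ≤ 1 := by
    rw [hc]; simpa [dot, ha, hb] using abs_real_inner_le_norm a b
  have hc2 : c^2 ≤ 1 := by nlinarith [sq_abs c, abs_nonneg c]
  have hσ : ‖s‖^2 ≤ 1 := by nlinarith [norm_nonneg s]
  have hσ0 : 0 ≤ ‖s‖^2 := sq_nonneg _
  set Q := u^2+v^2-2*c*u*v with hQdef
  rcases le_or_gt Q 0 with h | h
  · nlinarith
  · by_cases hcc : c^2 = 1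
    · exfalso
      have hdiv : (‖s‖^2/Q)*Q = ‖s‖^2 := div_mul_cancel₀ _ (ne_of_gt h)
      have := key (‖s‖^2/Q + 1)
      rw [hcc] at this
      nlinarith [this, hdiv]
    · have hclt : c^2 < 1 := lt_of_le_of_ne hc2 hcc
      have hd : 0 < 1 - c^2 := by linarith
      have hk := key (1/(1-c^2))
      have he : (1/(1-c^2))^2*(1-c^2) = 1/(1-c^2) := by field_simp
      rw [he] at hk
      have h3'' : Q/(1-c^2) ≤ ‖s‖^2 := by
        have : 1/(1-c^2)*Q = Q/(1-c^2) := by ring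
        linarith [this ▸ hk]
      have h4 : Q ≤ ‖s‖^2 * (1-c^2) := (div_le_iff₀ hd).mp h3''
      have h5 : ‖s‖^2 * (1-c^2) ≤ 1-c^2 := mul_le_of_le_one_left hd.le hσ
      linarith [hQdef]

private lemma sqrt_half_aux (u v c : ℝ) (hu : u^2 ≤ 1)
    (h : u^2 + v^2 + c^2 - 2*c*u*v ≤ 1) :
    |u*v - c| ≤ Real.sqrt (1-u^2) * Real.sqrt (1-v^2) := by
  have hprod : (u*v-c)^2 ≤ (1-u^2)*(1-v^2) := by nlinarith
  calc |u*v-c| = Real.sqrt ((u*v-c)^2) := (Real.sqrt_sq_eq_abs _).symm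
    _ ≤ Real.sqrt ((1-u^2)*(1-v^2)) := Real.sqrt_le_sqrt hprod
    _ = _ := Real.sqrt_mul (by linarith) _

private lemma sqrt_scale_aux (r' r u : ℝ) (hr' : 0 ≤ r') (hr : |r| + r' ≤ 1) :
    r' * Real.sqrt (1-u^2) ≤ Real.sqrt ((1-|r|)^2 - (r'*u)^2) := by
  have h1 : r' * Real.sqrt (1-u^2) = Real.sqrt (r'^2 * (1-u^2)) := by
    rw [Real.sqrt_mul (sq_nonneg r'), Real.sqrt_sq hr']
  rw [h1]
  apply Real.sqrt_le_sqrt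
  have : r' ≤ 1 - |r| := by linarith
  nlinarith [abs_nonneg r]

private lemma dotsq_le_one (a s : E3) (ha : ‖a‖ = 1) (hs : ‖s‖ ≤ 1) :
    (dot a s)^2 ≤ 1 := by
  have h := abs_real_inner_le_norm a s
  rw [ha, one_mul] at h
  have h2 : |dot a s| ≤ 1 := le_trans h hs
  nlinarith [sq_abs (dot a s), abs_nonneg (dot a s)]

/-- Theorem 2 (Bloch form): for two binary qubit POVMs, the associated functions
satisfy g^{(r)}_−(s) ≤ g^{(r)}_+(s') on all Bloch vectors s, s'. -/
theorem theorem2_povm_criterion (ai aj : E3) (hai : ‖ai‖ = 1) (haj : ‖aj‖ = 1)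
    (ri ri' rj rj' : ℝ) (hi' : 0 ≤ ri') (hi : |ri| + ri' ≤ 1)
    (hj' : 0 ≤ rj') (hj : |rj| + rj' ≤ 1) :
    ∀ s s' : E3, ‖s‖ ≤ 1 → ‖s'‖ ≤ 1 →
      grMinus ri ri' rj rj' ai aj s ≤ grPlus ri ri' rj rj' ai aj s' := by
  intro s s' hs hs'
  set c := dot ai aj with hcdef
  -- A common middle quantity
  have key : ∀ t : E3, ‖t‖ ≤ 1 →
      grMinus ri ri' rj rj' ai aj t ≤ ri' * rj' * c ∧
      ri' * rj' * c ≤ grPlus ri ri' rj rj' ai aj t := by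
    intro t ht
    set u := dot ai t with hudef
    set v := dot aj t with hvdef
    have hu2 : u^2 ≤ 1 := dotsq_le_one ai t hai ht
    have hv2 : v^2 ≤ 1 := dotsq_le_one aj t haj ht
    have hgram := gram_aux ai aj t hai haj ht
    rw [← hudef, ← hvdef, ← hcdef] at hgram
    have hgram' : u^2 + v^2 + c^2 - 2*c*u*v ≤ 1 := by linarith
    have hhalf := sqrt_half_aux u v c hu2 hgram'
    have hhl : u*v - Real.sqrt (1-u^2) * Real.sqrt (1-v^2) ≤ c := by
      have := le_trans (le_abs_self (u*v - c)) hhalf; linarith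
    have hhr : c ≤ u*v + Real.sqrt (1-u^2) * Real.sqrt (1-v^2) := by
      have := le_trans (neg_le_abs (u*v - c)) hhalf; linarith
    have hca : ri' * Real.sqrt (1-u^2) ≤ Real.sqrt ((1-|ri|)^2 - (ri'*u)^2) :=
      sqrt_scale_aux ri' ri u hi' hi
    have hcb : rj' * Real.sqrt (1-v^2) ≤ Real.sqrt ((1-|rj|)^2 - (rj'*v)^2) :=
      sqrt_scale_aux rj' rj v hj' hj
    have hAi : Aexp ri' ri ai t - ri = ri' * u := by simp [Aexp, hudef]
    have hAj : Aexp rj' rj aj t - rj = rj' * v := by simp [Aexp, hvdef]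
    have p1 : (ri' * Real.sqrt (1-u^2)) * (rj' * Real.sqrt (1-v^2))
        ≤ Real.sqrt ((1-|ri|)^2 - (ri'*u)^2) * Real.sqrt ((1-|rj|)^2 - (rj'*v)^2) :=
      mul_le_mul hca hcb (mul_nonneg hj' (Real.sqrt_nonneg _)) (Real.sqrt_nonneg _)
    have hnn : 0 ≤ ri' * rj' := mul_nonneg hi' hj'
    have p2 : ri' * rj' * (u*v - Real.sqrt (1-u^2) * Real.sqrt (1-v^2)) ≤ ri' * rj' * c :=
      mul_le_mul_of_nonneg_left hhl hnn
    have p3 : ri' * rj' * c ≤ ri' * rj' * (u*v + Real.sqrt (1-u^2) * Real.sqrt (1-v^2)) :=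
      mul_le_mul_of_nonneg_left hhr hnn
    constructor
    · rw [grMinus, hAi, hAj]
      nlinarith [p1, p2]
    · rw [grPlus, hAi, hAj]
      nlinarith [p1, p3]
  exact le_trans ((key s hs).1) ((key s' hs').2)
end
end

section
/- (Theorem 2, density-matrix form.) Let a_i, a_j ∈ ℝ³ be unit vectors, and let (r_i, r'_i), (r_j, r'_j) be real pairs with r'_l ≥ 0 and |r_l| + r'_l ≤ 1 for l = i, j. Define the observables A_l = r'_l·σ(a_l) + r_l·𝟙 (2×2 complex matrices). Then for any two qubit density matrices ρ, ρ', writing x_ρ = Re(Tr(ρ·A_i)) and y_ρ = Re(Tr(ρ·A_j)), one has (x_ρ−r_i)(y_ρ−r_j) − √((1−|r_i|)² − (x_ρ−r_i)²)·√((1−|r_j|)² − (y_ρ−r_j)²) ≤ (x_{ρ'}−r_i)(y_{ρ'}−r_j) + √((1−|r_i|)² − (x_{ρ'}−r_i)²)·√((1−|r_j|)² − (y_{ρ'}−r_j)²). -/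
noncomputable section
open scoped ComplexOrder

/-- The general binary qubit observable A = r'·σ(a) + r·𝟙. -/
def obsA (r' r : ℝ) (a : E3) : Matrix (Fin 2) (Fin 2) ℂ :=
  (r' : ℂ) • pauli a + (r : ℂ) • 1

/-! ### Auxiliary lemmas -/

lemma dot_eq (a b : E3) : dot a b = a 0 * b 0 + a 1 * b 1 + a 2 * b 2 := by
  simp [dot, PiLp.inner_apply, Fin.sum_univ_three]
  ring

lemma norm_one_sum_sq (a : E3) (h : ‖a‖ = 1) : a 0 ^ 2 + a 1 ^ 2 + a 2 ^ 2 = 1 := by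
  rw [EuclideanSpace.norm_eq, Fin.sum_univ_three, Real.sqrt_eq_one] at h
  simpa [sq_abs] using h

lemma norm_le_one_sum_sq (a : E3) (h : ‖a‖ ≤ 1) : a 0 ^ 2 + a 1 ^ 2 + a 2 ^ 2 ≤ 1 := by
  rw [EuclideanSpace.norm_eq, Fin.sum_univ_three, Real.sqrt_le_one] at h
  simpa [sq_abs] using h

lemma le_sqrt_mul_sqrt {A B C : ℝ} (hB : 0 ≤ B) (h : A ^ 2 ≤ B * C) :
    A ≤ Real.sqrt B * Real.sqrt C := by
  calc A ≤ |A| := le_abs_self A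
  _ = Real.sqrt (A ^ 2) := (Real.sqrt_sq_eq_abs A).symm
  _ ≤ Real.sqrt (B * C) := Real.sqrt_le_sqrt h
  _ = Real.sqrt B * Real.sqrt C := Real.sqrt_mul hB C

set_option maxHeartbeats 1000000 in
/-- Gram-determinant inequality. -/
lemma gram_s7 (a b n : E3) (ha : ‖a‖ = 1) (hb : ‖b‖ = 1) (hn : ‖n‖ ≤ 1) :
    (dot a b - dot a n * dot b n) ^ 2 ≤ (1 - (dot a n) ^ 2) * (1 - (dot b n) ^ 2) := by
  have hg : |dot a b| ≤ 1 := by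
    simpa [dot, ha, hb] using abs_real_inner_le_norm a b
  have hg2 : (dot a b) ^ 2 ≤ 1 := by
    nlinarith [abs_nonneg (dot a b), sq_abs (dot a b)]
  have ha' := norm_one_sum_sq a ha
  have hb' := norm_one_sum_sq b hb
  have hn' := norm_le_one_sum_sq n hn
  rw [dot_eq a b, dot_eq a n, dot_eq b n] at *
  set g := a 0 * b 0 + a 1 * b 1 + a 2 * b 2 with hgdef
  set p := a 0 * n 0 + a 1 * n 1 + a 2 * n 2 with hpdef
  set q := b 0 * n 0 + b 1 * n 1 + b 2 * n 2 with hqdef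
  set T := n 0 ^ 2 + n 1 ^ 2 + n 2 ^ 2 with hTdef
  have hid : T * (1 - g ^ 2) - (p ^ 2 + q ^ 2 - 2 * g * p * q) =
      (a 0 * (b 1 * n 2 - b 2 * n 1) - a 1 * (b 0 * n 2 - b 2 * n 0)
        + a 2 * (b 0 * n 1 - b 1 * n 0)) ^ 2 := by
    rw [hgdef, hpdef, hqdef, hTdef]
    linear_combination (q ^ 2 - T * (b 0 ^ 2 + b 1 ^ 2 + b 2 ^ 2)) * ha' + (p ^ 2 - T) * hb'
  have hD : p ^ 2 + q ^ 2 - 2 * g * p * q ≤ T * (1 - g ^ 2) := by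
    nlinarith [sq_nonneg (a 0 * (b 1 * n 2 - b 2 * n 1) - a 1 * (b 0 * n 2 - b 2 * n 0)
        + a 2 * (b 0 * n 1 - b 1 * n 0)), hid]
  nlinarith [sq_nonneg (p - q), sq_nonneg (p + q), hD, hg2, hn']

set_option maxHeartbeats 1000000 in
/-- The purely scalar core of Theorem 2. -/
lemma scalar_core (c d r' s' g p q p2 q2 : ℝ) (hr' : 0 ≤ r') (hs' : 0 ≤ s')
    (hc : r' ≤ c) (hd : s' ≤ d)
    (hp : p ^ 2 ≤ 1) (hq : q ^ 2 ≤ 1) (hp2 : p2 ^ 2 ≤ 1) (hq2 : q2 ^ 2 ≤ 1)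
    (hg : (g - p * q) ^ 2 ≤ (1 - p ^ 2) * (1 - q ^ 2))
    (hg2 : (g - p2 * q2) ^ 2 ≤ (1 - p2 ^ 2) * (1 - q2 ^ 2)) :
    (r' * p) * (s' * q) - Real.sqrt (c ^ 2 - (r' * p) ^ 2) * Real.sqrt (d ^ 2 - (s' * q) ^ 2)
      ≤ (r' * p2) * (s' * q2)
        + Real.sqrt (c ^ 2 - (r' * p2) ^ 2) * Real.sqrt (d ^ 2 - (s' * q2) ^ 2) := by
  have key : ∀ u v : ℝ, u ^ 2 ≤ 1 → v ^ 2 ≤ 1 →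
      (g - u * v) ^ 2 ≤ (1 - u ^ 2) * (1 - v ^ 2) →
      |(r' * u) * (s' * v) - r' * s' * g|
        ≤ Real.sqrt (c ^ 2 - (r' * u) ^ 2) * Real.sqrt (d ^ 2 - (s' * v) ^ 2) := by
    intro u v hu hv hguv
    have e4 : 0 ≤ r' ^ 2 * (1 - u ^ 2) := by nlinarith
    have e5 : 0 ≤ s' ^ 2 * (1 - v ^ 2) := by nlinarith
    have e2 : r' ^ 2 * (1 - u ^ 2) ≤ c ^ 2 - (r' * u) ^ 2 := by nlinarith
    have e3 : s' ^ 2 * (1 - v ^ 2) ≤ d ^ 2 - (s' * v) ^ 2 := by nlinarith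
    have e1 : ((r' * u) * (s' * v) - r' * s' * g) ^ 2
        ≤ (r' ^ 2 * (1 - u ^ 2)) * (s' ^ 2 * (1 - v ^ 2)) := by
      nlinarith [mul_le_mul_of_nonneg_left hguv (sq_nonneg (r' * s'))]
    have e6 : ((r' * u) * (s' * v) - r' * s' * g) ^ 2
        ≤ (c ^ 2 - (r' * u) ^ 2) * (d ^ 2 - (s' * v) ^ 2) :=
      e1.trans (mul_le_mul e2 e3 e5 (e4.trans e2))
    have hB : 0 ≤ c ^ 2 - (r' * u) ^ 2 := e4.trans e2
    rw [abs_le]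
    constructor
    · have := le_sqrt_mul_sqrt hB (by nlinarith [e6] :
        (-((r' * u) * (s' * v) - r' * s' * g)) ^ 2
          ≤ (c ^ 2 - (r' * u) ^ 2) * (d ^ 2 - (s' * v) ^ 2))
      linarith
    · exact le_sqrt_mul_sqrt hB e6
  have k1 := abs_le.mp (key p q hp hq hg)
  have k2 := abs_le.mp (key p2 q2 hp2 hq2 hg2)
  linarith [k1.2, k2.1]

lemma herm_offdiag (ρ : Matrix (Fin 2) (Fin 2) ℂ) (h : ρ.IsHermitian) :
    ρ 1 0 = starRingEnd ℂ (ρ 0 1) := by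
  have := congrFun (congrFun h.symm 1) 0
  simpa [Matrix.conjTranspose_apply] using this

lemma herm_diag_im (ρ : Matrix (Fin 2) (Fin 2) ℂ) (h : ρ.IsHermitian) (i : Fin 2) :
    (ρ i i).im = 0 := by
  have := congrFun (congrFun h.symm i) i
  simp [Matrix.conjTranspose_apply] at this
  have := congrArg Complex.im this
  simp at this
  linarith

lemma trace_one_re (ρ : Matrix (Fin 2) (Fin 2) ℂ) (htr : ρ.trace = 1) :
    (ρ 0 0).re + (ρ 1 1).re = 1 := by
  have := congrArg Complex.re htr
  simpa [Matrix.trace_fin_two] using this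

/-- The Bloch vector of a 2×2 matrix. -/
def bloch_s7 (ρ : Matrix (Fin 2) (Fin 2) ℂ) : E3 :=
  (WithLp.equiv 2 (Fin 3 → ℝ)).symm
    ![2 * (ρ 0 1).re, -2 * (ρ 0 1).im, (ρ 0 0).re - (ρ 1 1).re]

lemma trace_obsA_re (r' r : ℝ) (a : E3) (ρ : Matrix (Fin 2) (Fin 2) ℂ)
    (h : ρ.IsHermitian) (htr : ρ.trace = 1) :
    (ρ * obsA r' r a).trace.re = r' * dot a (bloch_s7 ρ) + r := by
  have h10 := herm_offdiag ρ h
  have h00 := herm_diag_im ρ h 0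
  have h11 := herm_diag_im ρ h 1
  have htr' := trace_one_re ρ htr
  rw [dot_eq]
  simp [obsA, pauli, bloch_s7, Matrix.trace_fin_two, Matrix.mul_apply, Fin.sum_univ_two, h10,
    Matrix.one_apply, Complex.add_re, Complex.mul_re, Complex.mul_im, h00, h11]
  linear_combination r * htr'

lemma det_ineq (ρ : Matrix (Fin 2) (Fin 2) ℂ) (hρ : ρ.PosSemidef) (htr : ρ.trace = 1) :
    (ρ 0 1).re ^ 2 + (ρ 0 1).im ^ 2 ≤ (ρ 0 0).re * (ρ 1 1).re := by
  have h10 := herm_offdiag ρ hρ.1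
  have h1 := hρ.dotProduct_mulVec_nonneg ![ρ 1 1, -(ρ 1 0)]
  have h2 := hρ.dotProduct_mulVec_nonneg ![ρ 0 1, -(ρ 0 0)]
  have h00 := herm_diag_im ρ hρ.1 0
  have h11 := herm_diag_im ρ hρ.1 1
  have htr' := trace_one_re ρ htr
  rw [Complex.le_def] at h1 h2
  simp [dotProduct, Matrix.mulVec, Fin.sum_univ_two, h10, Complex.add_re,
    Complex.mul_re, Complex.mul_im, h00, h11] at h1 h2
  nlinarith [h1.1, h2.1, htr']

lemma bloch_norm_le_one (ρ : Matrix (Fin 2) (Fin 2) ℂ) (hρ : ρ.PosSemidef)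
    (htr : ρ.trace = 1) : ‖bloch_s7 ρ‖ ≤ 1 := by
  have hdet := det_ineq ρ hρ htr
  have htr' := trace_one_re ρ htr
  rw [EuclideanSpace.norm_eq, Fin.sum_univ_three, Real.sqrt_le_one]
  simp only [bloch_s7, WithLp.equiv_symm_apply, WithLp.ofLp_toLp, Matrix.cons_val_zero, Matrix.cons_val_one,
    Matrix.head_cons, Matrix.cons_val_two, Matrix.tail_cons, Real.norm_eq_abs, sq_abs]
  nlinarith [hdet, htr']

/-- Theorem 2 (density-matrix form): with x_ρ = Re Tr(ρA_i), y_ρ = Re Tr(ρA_j) for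
A_l = r'_l·σ(a_l) + r_l·𝟙, any two qubit density matrices ρ, ρ' satisfy
g^{(r)}_−(ρ) ≤ g^{(r)}_+(ρ'). -/
theorem theorem2_density_matrix_form (ai aj : E3) (hai : ‖ai‖ = 1) (haj : ‖aj‖ = 1)
    (ri ri' rj rj' : ℝ) (hi' : 0 ≤ ri') (hi : |ri| + ri' ≤ 1)
    (hj' : 0 ≤ rj') (hj : |rj| + rj' ≤ 1)
    (ρ ρ' : Matrix (Fin 2) (Fin 2) ℂ)
    (hρ : ρ.PosSemidef) (hρtr : ρ.trace = 1)
    (hρ' : ρ'.PosSemidef) (hρ'tr : ρ'.trace = 1) :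
    ((ρ * obsA ri' ri ai).trace.re - ri) * ((ρ * obsA rj' rj aj).trace.re - rj)
        - Real.sqrt ((1 - |ri|) ^ 2 - ((ρ * obsA ri' ri ai).trace.re - ri) ^ 2)
          * Real.sqrt ((1 - |rj|) ^ 2 - ((ρ * obsA rj' rj aj).trace.re - rj) ^ 2)
      ≤ ((ρ' * obsA ri' ri ai).trace.re - ri) * ((ρ' * obsA rj' rj aj).trace.re - rj)
        + Real.sqrt ((1 - |ri|) ^ 2 - ((ρ' * obsA ri' ri ai).trace.re - ri) ^ 2)
          * Real.sqrt ((1 - |rj|) ^ 2 - ((ρ' * obsA rj' rj aj).trace.re - rj) ^ 2) := by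
  have hn := bloch_norm_le_one ρ hρ hρtr
  have hn' := bloch_norm_le_one ρ' hρ' hρ'tr
  have t1 := trace_obsA_re ri' ri ai ρ hρ.1 hρtr
  have t2 := trace_obsA_re rj' rj aj ρ hρ.1 hρtr
  have t3 := trace_obsA_re ri' ri ai ρ' hρ'.1 hρ'tr
  have t4 := trace_obsA_re rj' rj aj ρ' hρ'.1 hρ'tr
  rw [t1, t2, t3, t4]
  have sq_le_one : ∀ (a : E3) (n : E3), ‖a‖ = 1 → ‖n‖ ≤ 1 → (dot a n) ^ 2 ≤ 1 := by
    intro a n ha hnle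
    have h := abs_real_inner_le_norm a n
    have : |dot a n| ≤ 1 := by
      rw [ha] at h; simpa [dot] using h.trans (by simpa using hnle)
    nlinarith [abs_nonneg (dot a n), sq_abs (dot a n)]
  have main := scalar_core (1 - |ri|) (1 - |rj|) ri' rj' (dot ai aj)
    (dot ai (bloch_s7 ρ)) (dot aj (bloch_s7 ρ)) (dot ai (bloch_s7 ρ')) (dot aj (bloch_s7 ρ'))
    hi' hj' (by linarith) (by linarith)
    (sq_le_one ai (bloch_s7 ρ) hai hn) (sq_le_one aj (bloch_s7 ρ) haj hn)
    (sq_le_one ai (bloch_s7 ρ') hai hn') (sq_le_one aj (bloch_s7 ρ') haj hn')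
    (gram_s7 ai aj (bloch_s7 ρ) hai haj hn) (gram_s7 ai aj (bloch_s7 ρ') hai haj hn')
  simpa only [add_sub_cancel_right] using main
end
end

section
/- There do not exist unit vectors a₀, a₁ ∈ ℝ³ and vectors s₀, s₁ ∈ ℝ³ with ‖s₀‖ ≤ 1 and ‖s₁‖ ≤ 1 such that a₀·s₀ = 1, a₁·s₀ = 1, a₀·s₁ = 1 and a₁·s₁ = −1. In other words, the correlation with expectation values A₀ = A₁ = 1 on one state and A₀ = 1, A₁ = −1 on another state cannot be generated by two projective binary measurements on qubit states. -/
noncomputable section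
open scoped ComplexOrder

lemma eq_of_dot_one {a s : E3} (ha : ‖a‖ = 1) (hs : ‖s‖ ≤ 1) (h : dot a s = 1) : a = s := by
  have hcs := real_inner_le_norm a s
  have hns : ‖s‖ = 1 := le_antisymm hs (by
    have : (1:ℝ) ≤ ‖a‖ * ‖s‖ := h ▸ hcs
    simpa [ha] using this)
  exact (inner_eq_one_iff_of_norm_eq_one ha hns).mp h

/-- The correlation A₀ = A₁ = 1 on one state and A₀ = 1, A₁ = −1 on another cannot be
generated by two projective binary measurements on qubit states. -/
theorem no_pvm_realization :
    ¬ ∃ (a₀ a₁ s₀ s₁ : E3),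
        ‖a₀‖ = 1 ∧ ‖a₁‖ = 1 ∧ ‖s₀‖ ≤ 1 ∧ ‖s₁‖ ≤ 1 ∧
        dot a₀ s₀ = 1 ∧ dot a₁ s₀ = 1 ∧ dot a₀ s₁ = 1 ∧ dot a₁ s₁ = -1 := by
  rintro ⟨a₀, a₁, s₀, s₁, ha₀, ha₁, hs₀, hs₁, h00, h10, h01, h11⟩
  have e1 : a₀ = s₀ := eq_of_dot_one ha₀ hs₀ h00
  have e2 : a₁ = s₀ := eq_of_dot_one ha₁ hs₀ h10
  have e3 : a₀ = s₁ := eq_of_dot_one ha₀ hs₁ h01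
  have : dot a₁ s₁ = 1 := by
    rw [e2, ← e1]; exact h01
  linarith [h11, this]
end
end

section
/- There exist real pairs (r₀, r'₀), (r₁, r'₁) with r'_l ≥ 0 and |r_l| + r'_l ≤ 1, unit vectors a₀, a₁ ∈ ℝ³, and vectors s₀, s₁ ∈ ℝ³ with ‖s₀‖ ≤ 1 and ‖s₁‖ ≤ 1, such that r'₀·(a₀·s₀) + r₀ = 1, r'₁·(a₁·s₀) + r₁ = 1, r'₀·(a₀·s₁) + r₀ = 1 and r'₁·(a₁·s₁) + r₁ = −1 (for instance r₀ = 1, r'₀ = 0, r₁ = 0, r'₁ = 1, s₀ = a₁, s₁ = −a₁, corresponding to the POVM observable A₀ = 𝟙 and the projective observable A₁ = σ_z on the states |0⟩ and |1⟩). -/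
noncomputable section
open scoped ComplexOrder

/-- The same correlation is realizable by general binary qubit POVMs: there exist
POVM parameters, unit measurement directions and Bloch vectors realizing
A₀ = A₁ = 1 on one state and A₀ = 1, A₁ = −1 on the other. -/
theorem povm_realization_exists :
    ∃ (r₀ r₀' r₁ r₁' : ℝ) (a₀ a₁ s₀ s₁ : E3),
        0 ≤ r₀' ∧ |r₀| + r₀' ≤ 1 ∧
        0 ≤ r₁' ∧ |r₁| + r₁' ≤ 1 ∧
        ‖a₀‖ = 1 ∧ ‖a₁‖ = 1 ∧ ‖s₀‖ ≤ 1 ∧ ‖s₁‖ ≤ 1 ∧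
        r₀' * dot a₀ s₀ + r₀ = 1 ∧ r₁' * dot a₁ s₀ + r₁ = 1 ∧
        r₀' * dot a₀ s₁ + r₀ = 1 ∧ r₁' * dot a₁ s₁ + r₁ = -1 := by
  set e : E3 := EuclideanSpace.single 0 (1 : ℝ) with he
  have hne : ‖e‖ = 1 := by simp [he]
  have hdot : dot e e = 1 := by
    simp [dot, he, EuclideanSpace.inner_single_left]
  refine ⟨1, 0, 0, 1, e, e, e, -e, ?_, ?_, ?_, ?_, hne, hne, le_of_eq hne,
    ?_, ?_, ?_, ?_, ?_⟩ <;>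
    simp [dot, inner_neg_right, hdot, hne, he, EuclideanSpace.single_apply, Fin.sum_univ_succ]
end
end

section
/- (Minimal device-referring protocol.) Let (r₀, r'₀), (r₁, r'₁) be real pairs with r'_l ≥ 0 and |r_l| + r'_l ≤ 1, let a₀, a₁ ∈ ℝ³ be unit vectors, and let s₀, s₁ ∈ ℝ³ satisfy ‖s₀‖ ≤ 1 and ‖s₁‖ ≤ 1. If r'₀·(a₀·s₀) + r₀ = 1, r'₀·(a₀·s₁) + r₀ = 1, r'₁·(a₁·s₀) + r₁ = 1, and r'₁·(a₁·s₁) + r₁ = −1, then necessarily r'₀ = 0, r₀ = 1, r'₁ = 1, r₁ = 0, s₀ = a₁ and s₁ = −a₁; that is, the first observable is the identity, the second is projective, and the two states are the eigenvectors of the second observable. -/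
noncomputable section
open scoped ComplexOrder

lemma dot_le_one (a s : E3) (ha : ‖a‖ = 1) (hs : ‖s‖ ≤ 1) : |dot a s| ≤ 1 := by
  have := abs_real_inner_le_norm a s
  calc |dot a s| ≤ ‖a‖ * ‖s‖ := this
    _ ≤ 1 := by rw [ha]; linarith

lemma eq_of_dot (a s : E3) (ha : ‖a‖ = 1) (hs : ‖s‖ ≤ 1) (h : dot a s = 1) : s = a := by
  have hd : (inner ℝ s a : ℝ) = 1 := by rw [real_inner_comm]; exact h
  have hsq : ‖s - a‖ ^ 2 = ‖s‖ ^ 2 - 2 * inner ℝ s a + ‖a‖ ^ 2 := norm_sub_sq_real s a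
  have hz : ‖s - a‖ ^ 2 ≤ 0 := by
    rw [hsq, hd, ha]; nlinarith [norm_nonneg s]
  have : ‖s - a‖ = 0 := by nlinarith [norm_nonneg (s - a)]
  exact sub_eq_zero.mp (norm_eq_zero.mp this)

/-- Minimal device-referring protocol: the correlation A₀ = A₁ = 1 on one state and
A₀ = 1, A₁ = −1 on another uniquely determines the devices: A₀ = 𝟙 (r'₀ = 0, r₀ = 1),
A₁ is projective (r'₁ = 1, r₁ = 0), and the states are the eigenvectors of A₁. -/
theorem minimal_device_referring
    (r₀ r₀' r₁ r₁' : ℝ) (a₀ a₁ s₀ s₁ : E3)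
    (h₀' : 0 ≤ r₀') (h₀ : |r₀| + r₀' ≤ 1)
    (h₁' : 0 ≤ r₁') (h₁ : |r₁| + r₁' ≤ 1)
    (ha₀ : ‖a₀‖ = 1) (ha₁ : ‖a₁‖ = 1) (hs₀ : ‖s₀‖ ≤ 1) (hs₁ : ‖s₁‖ ≤ 1)
    (e₀₀ : r₀' * dot a₀ s₀ + r₀ = 1) (e₀₁ : r₀' * dot a₀ s₁ + r₀ = 1)
    (e₁₀ : r₁' * dot a₁ s₀ + r₁ = 1) (e₁₁ : r₁' * dot a₁ s₁ + r₁ = -1) :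
    r₀' = 0 ∧ r₀ = 1 ∧ r₁' = 1 ∧ r₁ = 0 ∧ s₀ = a₁ ∧ s₁ = -a₁ := by
  have b10 := abs_le.mp (dot_le_one a₁ s₀ ha₁ hs₀)
  have b11 := abs_le.mp (dot_le_one a₁ s₁ ha₁ hs₁)
  have b00 := abs_le.mp (dot_le_one a₀ s₀ ha₀ hs₀)
  have b01 := abs_le.mp (dot_le_one a₀ s₁ ha₀ hs₁)
  have habs₁ := abs_le.mp (le_refl |r₁|)
  have habs₀ := abs_le.mp (le_refl |r₀|)
  have hr₁ : r₁ = 0 := by nlinarith [habs₁.1, habs₁.2, b10.2, b11.1]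
  have hr₁' : r₁' = 1 := by nlinarith [b10.2]
  have hd10 : dot a₁ s₀ = 1 := by nlinarith
  have hd11 : dot a₁ s₁ = -1 := by nlinarith
  have hS₀ : s₀ = a₁ := eq_of_dot a₁ s₀ ha₁ hs₀ hd10
  have hS₁ : s₁ = -a₁ := by
    have hdn : dot a₁ (-s₁) = 1 := by
      have : dot a₁ (-s₁) = - dot a₁ s₁ := by simp [dot, inner_neg_right]
      rw [this, hd11]; ring
    have h' := eq_of_dot a₁ (-s₁) ha₁ (by simpa using hs₁) hdn
    exact neg_eq_iff_eq_neg.mp h'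
  have hr₀' : r₀' = 0 := by
    by_contra hne
    have hp : 0 < r₀' := lt_of_le_of_ne h₀' (Ne.symm hne)
    have hle0 : r₀' * dot a₀ s₀ ≤ r₀' * 1 := mul_le_mul_of_nonneg_left b00.2 h₀'
    have hle1 : r₀' * dot a₀ s₁ ≤ r₀' * 1 := mul_le_mul_of_nonneg_left b01.2 h₀'
    have hc0 : dot a₀ s₀ = 1 := mul_left_cancel₀ hne (le_antisymm hle0 (by linarith [habs₀.2]))
    have hc1 : dot a₀ s₁ = 1 := mul_left_cancel₀ hne (le_antisymm hle1 (by linarith [habs₀.2]))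
    have h1 : s₀ = a₀ := eq_of_dot a₀ s₀ ha₀ hs₀ hc0
    have h2 : s₁ = a₀ := eq_of_dot a₀ s₁ ha₀ hs₁ hc1
    have heq : dot a₁ s₀ = dot a₁ s₁ := by rw [h1.trans h2.symm]
    linarith [hd10, hd11, heq]
  have hr₀ : r₀ = 1 := by rw [hr₀'] at e₀₀; linarith
  exact ⟨hr₀', hr₀, hr₁', hr₁, hS₀, hS₁⟩
end
end

section
/- (Separability criterion underlying the optimized NPA test.) Let H be a finite index set, p : H → ℝ with p_h ≥ 0, let ρ_h be n×n complex positive semidefinite matrices and σ_h be m×m complex positive semidefinite matrices, and set ρ = Σ_h p_h · (ρ_h ⊗ σ_h) (Kronecker product). Let O : ι → Matrix (Fin n) (Fin n) ℂ and O' : κ → Matrix (Fin m) (Fin m) ℂ be finite families of matrices. Then the real matrix Γ indexed by ι × κ with entries Γ_{(e,f),(e',f')} = (1/4)·Re( Tr[ ρ · ((O_e†·O_{e'} + O_{e'}†·O_e) ⊗ (O'_f†·O'_{f'} + O'_{f'}†·O'_f)) ] ) is positive semidefinite. -/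
noncomputable section
open scoped ComplexOrder
open Matrix

open Kronecker

lemma posSemidef_iff_eq_transpose_mul_self {𝕜 n : Type*} [RCLike 𝕜] [Fintype n]
    {A : Matrix n n 𝕜} : A.PosSemidef ↔ ∃ B : Matrix n n 𝕜, A = Bᴴ * B := by
  classical
  open scoped MatrixOrder in
  refine ⟨fun h => ?_, fun ⟨B, hB⟩ => hB ▸ posSemidef_conjTranspose_mul_self B⟩
  open scoped MatrixOrder in
  obtain ⟨B, hB⟩ := CStarAlgebra.nonneg_iff_eq_star_mul_self.mp h.nonneg
  exact ⟨B, hB⟩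

/-- auxiliary: re of trace of ρ (Mᴴ M) is nonneg for ρ PSD -/
lemma aux_re_trace_nonneg {n : ℕ} (ρ : Matrix (Fin n) (Fin n) ℂ) (hρ : ρ.PosSemidef)
    (M : Matrix (Fin n) (Fin n) ℂ) : 0 ≤ (ρ * (Mᴴ * M)).trace.re := by
  obtain ⟨B, rfl⟩ := posSemidef_iff_eq_transpose_mul_self.mp hρ
  have h1 : (Bᴴ * B * (Mᴴ * M)).trace = ((M * Bᴴ)ᴴ * (M * Bᴴ)).trace := by
    rw [conjTranspose_mul, conjTranspose_conjTranspose, Matrix.mul_assoc Bᴴ B,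
      trace_mul_comm Bᴴ]
    congr 1
    simp only [Matrix.mul_assoc]
  rw [h1]
  set N := M * Bᴴ with hNdef
  have h2 : (Nᴴ * N).trace = ∑ i, ∑ j, star (N j i) * N j i := by
    simp [Matrix.trace, Matrix.diag, Matrix.mul_apply, conjTranspose_apply]
  rw [h2, Complex.re_sum]
  refine Finset.sum_nonneg fun i _ => ?_
  rw [Complex.re_sum]
  refine Finset.sum_nonneg fun j _ => ?_
  have h3 : (star (N j i) * N j i).re = Complex.normSq (N j i) := by
    rw [Complex.star_def, mul_comm, Complex.mul_conj]
    simp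
  rw [h3]
  exact Complex.normSq_nonneg _

/-- auxiliary: symmetry of the conj-trace -/
lemma aux_trace_symm {n : ℕ} (ρ : Matrix (Fin n) (Fin n) ℂ) (hρ : ρ.PosSemidef)
    (A B : Matrix (Fin n) (Fin n) ℂ) :
    (ρ * (Bᴴ * A)).trace = star ((ρ * (Aᴴ * B)).trace) := by
  have : (ρ * (Aᴴ * B))ᴴ = (Bᴴ * A) * ρ := by
    rw [conjTranspose_mul, conjTranspose_mul, conjTranspose_conjTranspose, hρ.isHermitian.eq,
      Matrix.mul_assoc]
  rw [← trace_conjTranspose, this, trace_mul_comm]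

/-- auxiliary: the real Gram matrix of moments is PSD -/
lemma aux_gram_psd {n : ℕ} {ι : Type*} [Fintype ι]
    (ρ : Matrix (Fin n) (Fin n) ℂ) (hρ : ρ.PosSemidef)
    (O : ι → Matrix (Fin n) (Fin n) ℂ) :
    (Matrix.of fun e e' : ι => ((ρ * ((O e)ᴴ * O e')).trace.re) : Matrix ι ι ℝ).PosSemidef := by
  refine .of_dotProduct_mulVec_nonneg ?_ ?_
  · ext e e'
    simp only [conjTranspose_apply, Matrix.of_apply, star_trivial]
    rw [aux_trace_symm ρ hρ (O e) (O e'), Complex.star_def, Complex.conj_re]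
  · intro x
    set N : Matrix (Fin n) (Fin n) ℂ := ∑ e, (x e : ℂ) • O e with hN
    have key : (star x) ⬝ᵥ ((Matrix.of fun e e' : ι =>
        ((ρ * ((O e)ᴴ * O e')).trace.re) : Matrix ι ι ℝ) *ᵥ x)
        = (ρ * (Nᴴ * N)).trace.re := by
      have hNH : Nᴴ = ∑ e, (x e : ℂ) • (O e)ᴴ := by
        simp [hN, conjTranspose_sum, conjTranspose_smul]
      rw [hNH, hN]
      rw [Finset.sum_mul_sum]
      simp only [Matrix.smul_mul, Matrix.mul_smul, smul_smul]
      simp only [Matrix.mul_sum, Matrix.mul_smul, trace_sum, trace_smul, Complex.re_sum]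
      simp only [dotProduct, mulVec, dotProduct, Matrix.of_apply, star_trivial,
        Finset.mul_sum]
      refine Finset.sum_congr rfl fun e _ => ?_
      refine Finset.sum_congr rfl fun e' _ => ?_
      simp only [smul_eq_mul, Complex.mul_re, Complex.ofReal_re, Complex.ofReal_im,
        Complex.mul_im]
      ring
    rw [key]
    exact aux_re_trace_nonneg ρ hρ N

/-- auxiliary: Kronecker product of real PSD matrices is PSD -/
lemma aux_kron_psd {ι κ : Type*} [Fintype ι] [Fintype κ]
    {A : Matrix ι ι ℝ} {B : Matrix κ κ ℝ} (hA : A.PosSemidef) (hB : B.PosSemidef) :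
    (A ⊗ₖ B).PosSemidef := by
  obtain ⟨C, rfl⟩ := posSemidef_iff_eq_transpose_mul_self.mp hA
  obtain ⟨D, rfl⟩ := posSemidef_iff_eq_transpose_mul_self.mp hB
  have hct : (C ⊗ₖ D)ᴴ = Cᴴ ⊗ₖ Dᴴ := by
    ext ⟨i, j⟩ ⟨k, l⟩
    simp [conjTranspose_apply]
  rw [Matrix.mul_kronecker_mul, ← hct]
  exact posSemidef_conjTranspose_mul_self _

/-- auxiliary: nonneg real smul of PSD is PSD -/
lemma aux_smul_psd {ι : Type*} [Fintype ι] {A : Matrix ι ι ℝ} (hA : A.PosSemidef)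
    {c : ℝ} (hc : 0 ≤ c) : (c • A).PosSemidef := by
  refine .of_dotProduct_mulVec_nonneg ?_ fun x => ?_
  · show (c • A)ᴴ = c • A
    rw [conjTranspose_smul, hA.isHermitian.eq, star_trivial]
  · rw [smul_mulVec, dotProduct_smul, smul_eq_mul]
    exact mul_nonneg hc (hA.dotProduct_mulVec_nonneg x)

/-- Separability criterion underlying the optimized NPA test: for a separable state
ρ = Σ_h p_h ρ_h ⊗ σ_h, the real symmetrized moment matrix
Γ_{(e,f),(e',f')} = ¼ Re Tr[ρ ((O_e†O_e' + O_e'†O_e) ⊗ (O'_f†O'_f' + O'_f'†O'_f))]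
is positive semidefinite. -/
theorem separable_symmetrized_moment_matrix_posSemidef
    {n m : ℕ} {H ι κ : Type*} [Fintype H] [Fintype ι] [Fintype κ]
    (p : H → ℝ) (hp : ∀ h, 0 ≤ p h)
    (ρh : H → Matrix (Fin n) (Fin n) ℂ) (σh : H → Matrix (Fin m) (Fin m) ℂ)
    (hρh : ∀ h, (ρh h).PosSemidef) (hσh : ∀ h, (σh h).PosSemidef)
    (O : ι → Matrix (Fin n) (Fin n) ℂ) (O' : κ → Matrix (Fin m) (Fin m) ℂ) :
    (Matrix.of fun ef ef' : ι × κ =>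
        (1 / 4 : ℝ) *
          ((∑ h, (p h : ℂ) • (ρh h ⊗ₖ σh h)) *
            (((O ef.1)ᴴ * O ef'.1 + (O ef'.1)ᴴ * O ef.1) ⊗ₖ
              ((O' ef.2)ᴴ * O' ef'.2 + (O' ef'.2)ᴴ * O' ef.2))).trace.re
      : Matrix (ι × κ) (ι × κ) ℝ).PosSemidef := by
  have key : (Matrix.of fun ef ef' : ι × κ =>
        (1 / 4 : ℝ) *
          ((∑ h, (p h : ℂ) • (ρh h ⊗ₖ σh h)) *
            (((O ef.1)ᴴ * O ef'.1 + (O ef'.1)ᴴ * O ef.1) ⊗ₖ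
              ((O' ef.2)ᴴ * O' ef'.2 + (O' ef'.2)ᴴ * O' ef.2))).trace.re
      : Matrix (ι × κ) (ι × κ) ℝ)
      = ∑ h, p h • ((Matrix.of fun e e' : ι => ((ρh h * ((O e)ᴴ * O e')).trace.re)) ⊗ₖ
          (Matrix.of fun f f' : κ => ((σh h * ((O' f)ᴴ * O' f')).trace.re))) := by
    ext ⟨e, f⟩ ⟨e', f'⟩
    simp only [Matrix.of_apply, Matrix.sum_apply, Matrix.smul_apply, kroneckerMap_apply,
      smul_eq_mul]
    rw [Finset.sum_mul]
    rw [trace_sum]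
    rw [Complex.re_sum, Finset.mul_sum]
    refine Finset.sum_congr rfl fun h _ => ?_
    rw [Matrix.smul_mul, trace_smul, ← Matrix.mul_kronecker_mul, trace_kronecker]
    have hA : (ρh h * ((O e)ᴴ * O e' + (O e')ᴴ * O e)).trace
        = ((2 : ℝ) * ((ρh h * ((O e)ᴴ * O e')).trace.re) : ℝ) := by
      rw [Matrix.mul_add, trace_add, aux_trace_symm (ρh h) (hρh h) (O e) (O e')]
      rw [Complex.star_def, Complex.add_conj]
    have hB : (σh h * ((O' f)ᴴ * O' f' + (O' f')ᴴ * O' f)).trace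
        = ((2 : ℝ) * ((σh h * ((O' f)ᴴ * O' f')).trace.re) : ℝ) := by
      rw [Matrix.mul_add, trace_add, aux_trace_symm (σh h) (hσh h) (O' f) (O' f')]
      rw [Complex.star_def, Complex.add_conj]
    rw [hA, hB]
    simp only [smul_eq_mul, Complex.mul_re, Complex.mul_im, Complex.ofReal_re,
      Complex.ofReal_im]
    ring
  rw [key]
  refine Finset.sum_induction _ Matrix.PosSemidef (fun a b ha hb => ha.add hb)
    Matrix.PosSemidef.zero (fun h _ => ?_)
  exact aux_smul_psd (aux_kron_psd (aux_gram_psd _ (hρh h) O) (aux_gram_psd _ (hσh h) O')) (hp h)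
end
end
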